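/- arXiv:1203.0631 — 2 statements merged into one kernel-verified Lean document; each statement's English description precedes it below -/
import Mathlib

section
/- It suffices to prove hypercube expansion by one variable: if f : Bool^n → Bool depends on all its variables, S is a proper subset of the variables, and f has a relevance hypercube for S, then there exists a variable x ∉ S such that f has a relevance hypercube for S ∪ {x}. -/
/-- A Boolean function `f` depends on variable `i`. -/
def BoolFunDependsOn {ι : Type*} (f : (ι → Bool) → Bool) (i : ι) : Prop :=
  ∃ a b : ι → Bool, (∀ j, j ≠ i → a j = b j) ∧ f a ≠ f b

/-- The projection of `f` obtained by fixing all variables outside `S`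
to the values given by `p`. -/
def Restrict {n : ℕ} (f : (Fin n → Bool) → Bool) (S : Finset (Fin n))
    (p : Fin n → Bool) : (Fin n → Bool) → Bool :=
  fun x => f fun j => if j ∈ S then x j else p j

/-- `p` determines a relevance hypercube for `S`: the induced projection
depends on every variable of `S`. -/
def IsRelHypercube {n : ℕ} (f : (Fin n → Bool) → Bool) (S : Finset (Fin n))
    (p : Fin n → Bool) : Prop :=
  ∀ i ∈ S, BoolFunDependsOn (Restrict f S p) i

private lemma restrict_eq_of_agree {n : ℕ} (f : (Fin n → Bool) → Bool)
    (S : Finset (Fin n)) (p q : Fin n → Bool) (h : ∀ j ∉ S, p j = q j) :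
    Restrict f S p = Restrict f S q := by
  funext u
  unfold Restrict
  congr 1
  funext j
  by_cases hj : j ∈ S
  · simp [hj]
  · simp [hj, h j hj]

private lemma restrict_insert {n : ℕ} (f : (Fin n → Bool) → Bool)
    (S : Finset (Fin n)) (y : Fin n) (hy : y ∉ S) (q u : Fin n → Bool)
    (v : Bool) :
    Restrict f (insert y S) q (Function.update u y v)
      = Restrict f S (Function.update q y v) u := by
  unfold Restrict
  congr 1
  funext j
  rcases eq_or_ne j y with rfl | hjy
  · simp [hy]
  · by_cases hjS : j ∈ S <;>
      simp [hjS, hjy, Function.update_of_ne hjy]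

private lemma boundary {n : ℕ} (f : (Fin n → Bool) → Bool)
    (S : Finset (Fin n)) (y : Fin n) (hy : y ∉ S) (q : Fin n → Bool) (v : Bool)
    (hq : IsRelHypercube f S q)
    (hne : Restrict f S q ≠ Restrict f S (Function.update q y v)) :
    IsRelHypercube f (insert y S) q := by
  intro i hi
  rcases Finset.mem_insert.mp hi with rfl | hiS
  · obtain ⟨u, hu⟩ := Function.ne_iff.mp hne
    refine ⟨Function.update u i (q i), Function.update u i v, ?_, ?_⟩
    · intro j hj
      simp [Function.update_of_ne hj]
    · rw [restrict_insert f S i hy q u (q i), restrict_insert f S i hy q u v,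
        Function.update_eq_self]
      exact hu
  · obtain ⟨a, b, hab, hfab⟩ := hq i hiS
    refine ⟨Function.update a y (q y), Function.update b y (q y), ?_, ?_⟩
    · intro j hj
      rcases eq_or_ne j y with rfl | hjy
      · simp
      · simp [Function.update_of_ne hjy, hab j hj]
    · rw [restrict_insert f S y hy q a (q y), restrict_insert f S y hy q b (q y),
        Function.update_eq_self]
      exact hfab

private lemma expandGood {n : ℕ} (f : (Fin n → Bool) → Bool)
    (S : Finset (Fin n)) (x : Fin n) (hx : x ∉ S) (a b : Fin n → Bool)
    (hab : ∀ j, j ≠ x → a j = b j) (hfab : f a ≠ f b)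
    (ha : IsRelHypercube f S a) :
    IsRelHypercube f (insert x S) a := by
  intro i hi
  rcases Finset.mem_insert.mp hi with rfl | hiS
  · refine ⟨a, Function.update a i (b i), ?_, ?_⟩
    · intro j hj
      simp [Function.update_of_ne hj]
    · have h1 : Restrict f (insert i S) a a = f a := by
        unfold Restrict
        congr 1
        funext j
        by_cases h : j ∈ insert i S <;> simp [h]
      have h2 : Restrict f (insert i S) a (Function.update a i (b i)) = f b := by
        unfold Restrict
        congr 1
        funext j
        rcases eq_or_ne j i with rfl | hji
        · simp
        · by_cases h : j ∈ insert i S <;>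
            simp [h, Function.update_of_ne hji, hab j hji]
      rw [h1, h2]
      exact hfab
  · obtain ⟨u, w, huw, hfw⟩ := ha i hiS
    refine ⟨Function.update u x (a x), Function.update w x (a x), ?_, ?_⟩
    · intro j hj
      rcases eq_or_ne j x with rfl | hjx
      · simp
      · simp [Function.update_of_ne hjx, huw j hj]
    · rw [restrict_insert f S x hx a u (a x), restrict_insert f S x hx a w (a x),
        Function.update_eq_self]
      exact hfw

/-- Hypercube expansion by one variable. -/
theorem stmt3 {n : ℕ} (f : (Fin n → Bool) → Bool) (hf : ∀ i, BoolFunDependsOn f i)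
    (S : Finset (Fin n)) (hS : S ≠ Finset.univ)
    (p : Fin n → Bool) (hp : IsRelHypercube f S p) :
    ∃ x ∉ S, ∃ p', IsRelHypercube f (insert x S) p' := by
  obtain ⟨x, hx⟩ : ∃ x, x ∉ S := by
    by_contra h
    push_neg at h
    exact hS (Finset.eq_univ_iff_forall.mpr h)
  obtain ⟨a, b, hab, hfab⟩ := hf x
  suffices H : ∀ k (q : Fin n → Bool), IsRelHypercube f S q →
      (Finset.univ.filter (fun j => j ∉ S ∧ q j ≠ a j)).card ≤ k →
      ∃ y ∉ S, ∃ p', IsRelHypercube f (insert y S) p' from H _ p hp le_rfl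
  intro k
  induction k with
  | zero =>
    intro q hq hcard
    have hag : ∀ j ∉ S, q j = a j := by
      intro j hj
      by_contra hne
      have hmem : j ∈ Finset.univ.filter (fun j => j ∉ S ∧ q j ≠ a j) :=
        Finset.mem_filter.mpr ⟨Finset.mem_univ j, hj, hne⟩
      have := Finset.card_pos.mpr ⟨j, hmem⟩
      omega
    have hEq : Restrict f S a = Restrict f S q :=
      restrict_eq_of_agree f S a q (fun j hj => (hag j hj).symm)
    have ha : IsRelHypercube f S a := fun i hi => hEq ▸ hq i hi
    exact ⟨x, hx, a, expandGood f S x hx a b hab hfab ha⟩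
  | succ k ih =>
    intro q hq hcard
    by_cases hall : ∀ j ∉ S, q j = a j
    · have hEq : Restrict f S a = Restrict f S q :=
        restrict_eq_of_agree f S a q (fun j hj => (hall j hj).symm)
      have ha : IsRelHypercube f S a := fun i hi => hEq ▸ hq i hi
      exact ⟨x, hx, a, expandGood f S x hx a b hab hfab ha⟩
    · push_neg at hall
      obtain ⟨y, hyS, hyne⟩ := hall
      set q' := Function.update q y (a y) with hq'def
      by_cases hgood : IsRelHypercube f S q'
      · apply ih q' hgood
        have hymem : y ∈ Finset.univ.filter (fun j => j ∉ S ∧ q j ≠ a j) :=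
          Finset.mem_filter.mpr ⟨Finset.mem_univ y, hyS, hyne⟩
        have hsub : Finset.univ.filter (fun j => j ∉ S ∧ q' j ≠ a j) ⊆
            (Finset.univ.filter (fun j => j ∉ S ∧ q j ≠ a j)).erase y := by
          intro j hj
          simp only [Finset.mem_filter] at hj
          have hjy : j ≠ y := by
            rintro rfl
            exact hj.2.2 (by simp [hq'def])
          refine Finset.mem_erase.mpr ⟨hjy, Finset.mem_filter.mpr
            ⟨Finset.mem_univ _, hj.2.1, ?_⟩⟩
          have : q' j = q j := Function.update_of_ne hjy (a y) q
          rw [← this]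
          exact hj.2.2
        have h1 := Finset.card_le_card hsub
        have h2 := Finset.card_erase_of_mem hymem
        omega
      · refine ⟨y, hyS, q, boundary f S y hyS q (a y) hq ?_⟩
        intro heq
        exact hgood (fun i hi => heq ▸ hq i hi)
end

section
/- Let f : Bool^n → Bool be of the form f(x) = h₀(x_{Z₀}, h(h₁(x_{Z₁}),…,hₘ(x_{Zₘ}))) where Z₀,…,Zₘ partition the variables, each hᵢ (i ≥ 1) depends on all variables of Zᵢ, h depends on all its m arguments, and h₀ depends on all variables in Z₀ and on its last argument. Suppose for each i ≥ 1 there is a relevance hypercube for a nonempty subset uᵢ ⊆ Zᵢ of the function hᵢ, and there is an assignment p₀ of constants to Z₀ making h₀(·, u) equal to u or ¬u as a function of its last argument u. Then f has a relevance hypercube for u₁ ∪ … ∪ uₘ. -/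
theorem stmt15 {n m : ℕ}
    (Z0 : Finset (Fin n)) (Z : Fin m → Finset (Fin n))
    (hd0 : ∀ i, Disjoint Z0 (Z i))
    (hd : ∀ i j, i ≠ j → Disjoint (Z i) (Z j))
    (hcov : Z0 ∪ Finset.univ.biUnion Z = Finset.univ)
    (h0 : (Fin n → Bool) → Bool → Bool)
    (h0only : ∀ x y u, (∀ j ∈ Z0, x j = y j) → h0 x u = h0 y u)
    (h0dep : ∀ j ∈ Z0, ∃ u : Bool, BoolFunDependsOn (fun x => h0 x u) j)
    (h0last : ∃ x, h0 x false ≠ h0 x true)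
    (h : (Fin m → Bool) → Bool) (hdep : ∀ i, BoolFunDependsOn h i)
    (hi : Fin m → (Fin n → Bool) → Bool)
    (hionly : ∀ i x y, (∀ j ∈ Z i, x j = y j) → hi i x = hi i y)
    (hidep : ∀ i, ∀ j ∈ Z i, BoolFunDependsOn (hi i) j)
    (u : Fin m → Finset (Fin n))
    (hus : ∀ i, u i ⊆ Z i) (hune : ∀ i, (u i).Nonempty)
    (huh : ∀ i, ∃ p, IsRelHypercube (hi i) (u i) p)
    (hp0 : ∃ p0 : Fin n → Bool, ∃ c : Bool, ∀ w : Bool, h0 p0 w = xor c w) :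
    ∃ p, IsRelHypercube (fun x => h0 x (h fun i => hi i x))
      (Finset.univ.biUnion u) p := by

  classical
  obtain ⟨p0, c, hc⟩ := hp0
  choose pc hpc using huh
  set S : Finset (Fin n) := Finset.univ.biUnion u with hSdef
  have hmemS : ∀ j, j ∈ S ↔ ∃ i, j ∈ u i := by
    intro j; simp [hSdef]
  have hZuniq : ∀ {i i' : Fin m} {j}, j ∈ Z i → j ∈ Z i' → i = i' := by
    intro i i' j h1 h2
    by_contra hne
    exact (Finset.disjoint_left.mp (hd i i' hne) h1) h2
  have hZ0 : ∀ {i j}, j ∈ Z i → j ∉ Z0 := by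
    intro i j h1
    exact Finset.disjoint_right.mp (hd0 i) h1
  have guZ : ∀ {i j}, j ∈ u i → j ∈ Z i := fun {i j} hj => hus i hj
  have huuniq : ∀ {i i' : Fin m} {j}, j ∈ u i → j ∈ u i' → i = i' :=
    fun h1 h2 => hZuniq (guZ h1) (guZ h2)
  set p : Fin n → Bool := fun j =>
    if j ∈ Z0 then p0 j else if hj : ∃ i, j ∈ Z i then pc hj.choose j else false
    with hpdef
  have hpZ : ∀ i j, j ∈ Z i → p j = pc i j := by
    intro i j hj
    have h1 : j ∉ Z0 := hZ0 hj
    have h2 : ∃ i, j ∈ Z i := ⟨i, hj⟩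
    have h3 : h2.choose = i := hZuniq h2.choose_spec hj
    simp only [hpdef, if_neg h1, dif_pos h2, h3]
  set g : Fin m → (Fin n → Bool) → Bool := fun i => Restrict (hi i) (u i) (pc i) with hgdef
  have hSZ : ∀ {i j}, j ∈ Z i → (j ∈ S ↔ j ∈ u i) := by
    intro i j hj
    constructor
    · intro hjs
      obtain ⟨i', hi'⟩ := (hmemS j).mp hjs
      have h4 := hZuniq (guZ hi') hj
      exact h4 ▸ hi'
    · intro hju; exact (hmemS j).mpr ⟨i, hju⟩
  have key : ∀ x, Restrict (fun x => h0 x (h fun i => hi i x)) S p x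
      = xor c (h fun i => g i x) := by
    intro x
    show h0 (fun j => if j ∈ S then x j else p j) (h fun i => hi i (fun j => if j ∈ S then x j else p j)) = _
    set y : Fin n → Bool := fun j => if j ∈ S then x j else p j with hydef
    have hy0 : ∀ j ∈ Z0, y j = p0 j := by
      intro j hj
      have hjs : j ∉ S := by
        intro hjs
        obtain ⟨i, hji⟩ := (hmemS j).mp hjs
        exact hZ0 (guZ hji) hj
      simp only [hydef, if_neg hjs, hpdef, if_pos hj]
    have hyi : ∀ i, hi i y = g i x := by
      intro i
      apply hionly
      intro j hj
      by_cases hju : j ∈ u i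
      · have hjs : j ∈ S := (hSZ hj).mpr hju
        show y j = _
        simp only [hgdef, hydef, if_pos hjs, if_pos hju]
      · have hjs : j ∉ S := fun hjs => hju ((hSZ hj).mp hjs)
        show y j = _
        simp only [hydef, if_neg hjs, if_neg hju, hpZ i j hj]
    rw [h0only y p0 _ hy0, hc]
    congr 2
    exact funext hyi
  have gonly : ∀ i x y, (∀ j ∈ u i, x j = y j) → g i x = g i y := by
    intro i x y hxy
    show hi i _ = hi i _
    congr 1
    funext j
    by_cases hj : j ∈ u i
    · simp [hj, hxy j hj]
    · simp [hj]
  have gsurj : ∀ i (v : Bool), ∃ z, g i z = v := by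
    intro i v
    obtain ⟨j0, hj0⟩ := hune i
    obtain ⟨a, b, _, hne⟩ := hpc i j0 hj0
    by_cases hga : g i a = v
    · exact ⟨a, hga⟩
    · refine ⟨b, ?_⟩
      have hne' : g i a ≠ g i b := hne
      revert hne' hga
      cases g i a <;> cases g i b <;> cases v <;> simp
  choose zf hzf using gsurj
  refine ⟨p, ?_⟩
  intro j hjS
  obtain ⟨i0, hji0⟩ := (hmemS j).mp hjS
  obtain ⟨A, B, hAB, hABne⟩ := hdep i0
  have hAB0 : A i0 ≠ B i0 := by
    intro hEq
    apply hABne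
    congr 1
    funext k
    by_cases hk : k = i0
    · subst hk; exact hEq
    · exact hAB k hk
  obtain ⟨a, b, hab, hgab⟩ := hpc i0 j hji0
  have hgab' : g i0 a ≠ g i0 b := hgab
  have hA'B' : ∃ a' b', (∀ k, k ≠ j → a' k = b' k) ∧ g i0 a' = A i0 ∧ g i0 b' = B i0 := by
    by_cases hga : g i0 a = A i0
    · refine ⟨a, b, hab, hga, ?_⟩
      revert hgab' hga hAB0
      cases g i0 a <;> cases g i0 b <;> cases A i0 <;> cases B i0 <;> simp
    · refine ⟨b, a, fun k hk => (hab k hk).symm, ?_, ?_⟩ <;>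
      · revert hgab' hga hAB0
        cases g i0 a <;> cases g i0 b <;> cases A i0 <;> cases B i0 <;> simp
  obtain ⟨a', b', hab', hga', hgb'⟩ := hA'B'
  set x1 : Fin n → Bool := fun k =>
    if k ∈ u i0 then a' k else if hk : ∃ i, k ∈ u i then zf hk.choose (A hk.choose) k else false
    with hx1
  set x2 : Fin n → Bool := fun k =>
    if k ∈ u i0 then b' k else if hk : ∃ i, k ∈ u i then zf hk.choose (A hk.choose) k else false
    with hx2
  have hxz : ∀ (i : Fin m), i ≠ i0 → ∀ k ∈ u i,
      x1 k = zf i (A i) k ∧ x2 k = zf i (A i) k := by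
    intro i hii k hk
    have hk0 : k ∉ u i0 := fun hh => hii (huuniq hk hh)
    have hex : ∃ i, k ∈ u i := ⟨i, hk⟩
    have hch : hex.choose = i := huuniq hex.choose_spec hk
    constructor
    · simp only [hx1, if_neg hk0, dif_pos hex, hch]
    · simp only [hx2, if_neg hk0, dif_pos hex, hch]
  have hgx1 : ∀ i, g i x1 = A i := by
    intro i
    by_cases hii : i = i0
    · subst hii
      have : g i x1 = g i a' := by
        apply gonly
        intro k hk
        simp only [hx1, if_pos hk]
      rw [this, hga']
    · have : g i x1 = g i (zf i (A i)) := by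
        apply gonly
        intro k hk
        exact (hxz i hii k hk).1
      rw [this, hzf]
  have hgx2 : ∀ i, g i x2 = B i := by
    intro i
    by_cases hii : i = i0
    · subst hii
      have : g i x2 = g i b' := by
        apply gonly
        intro k hk
        simp only [hx2, if_pos hk]
      rw [this, hgb']
    · have : g i x2 = g i (zf i (A i)) := by
        apply gonly
        intro k hk
        exact (hxz i hii k hk).2
      rw [this, hzf]
      exact hAB i hii
  refine ⟨x1, x2, ?_, ?_⟩
  · intro k hk
    by_cases hku : k ∈ u i0
    · simp only [hx1, hx2, if_pos hku]
      exact hab' k hk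
    · simp only [hx1, hx2, if_neg hku]
  · rw [key, key]
    have e1 : (fun i => g i x1) = A := funext hgx1
    have e2 : (fun i => g i x2) = B := funext hgx2
    rw [e1, e2]
    intro hEq
    apply hABne
    revert hEq
    cases c <;> simp
end
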